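/- Let V be a finite type, k ≥ 1, and f : Finset V → ℝ a monotone submodular set function. Suppose S ⊆ V is any finite set and v* ∈ V maximizes the marginal gain f(S ∪ {v}) − f(S) over all v ∈ V. Then for every T ⊆ V with |T| ≤ k, f(S ∪ {v*}) − f(S) ≥ (f(T) − f(S)) / k; i.e., each greedy step closes at least a 1/k fraction of the gap to the optimum. -/

import Mathlib

/-- Per-step progress of the greedy algorithm: if `v*` maximizes the marginal gain
of `f` with respect to `S`, then for every `T` of cardinality at most `k`, the
greedy step closes at least a `1/k` fraction of the gap `f T - f S`. -/
theorem greedy_step_gap {V : Type*} [Fintype V] [DecidableEq V]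
    (k : ℕ) (hk : 1 ≤ k)
    (f : Finset V → ℝ)
    (hmono : ∀ S T : Finset V, S ⊆ T → f S ≤ f T)
    (hsub : ∀ S T : Finset V, S ⊆ T → ∀ u ∉ T,
      f (insert u S) - f S ≥ f (insert u T) - f T)
    (S : Finset V) (vstar : V)
    (hmax : ∀ v : V, f (insert v S) - f S ≤ f (insert vstar S) - f S)
    (T : Finset V) (hT : T.card ≤ k) :
    f (insert vstar S) - f S ≥ (f T - f S) / k := by
  set g := f (insert vstar S) - f S with hg
  have hg0 : 0 ≤ g := by
    rcases S.eq_empty_or_nonempty with h | ⟨a, ha⟩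
    · have := hmax vstar
      have h2 := hmono S (insert vstar S) (Finset.subset_insert _ _)
      linarith
    · have := hmax a
      rw [Finset.insert_eq_self.mpr ha] at this
      linarith
  have key : ∀ A : Finset V, f (S ∪ A) - f S ≤ A.card * g := by
    intro A
    induction A using Finset.induction_on with
    | empty => simp
    | insert a A haA ih =>
      rw [Finset.union_insert]
      by_cases hmem : a ∈ S ∪ A
      · rw [Finset.insert_eq_self.mpr hmem]
        have : (A.card : ℝ) * g ≤ (insert a A).card * g := by
          apply mul_le_mul_of_nonneg_right _ hg0
          exact_mod_cast Finset.card_le_card (Finset.subset_insert _ _)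
        linarith
      · have h1 := hsub S (S ∪ A) Finset.subset_union_left a hmem
        have h2 := hmax a
        rw [Finset.card_insert_of_notMem haA]
        push_cast
        linarith
  have hTsub : f T - f S ≤ k * g := by
    have h1 := hmono T (S ∪ T) Finset.subset_union_right
    have h2 := key T
    have h3 : (T.card : ℝ) * g ≤ k * g := by
      apply mul_le_mul_of_nonneg_right _ hg0
      exact_mod_cast hT
    linarith
  rw [ge_iff_le, div_le_iff₀ (by positivity)]
  linarith [mul_comm (k:ℝ) g]
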